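/- Let G = K_{n₁} ⊕ (K_{n₂} ∪ K_{n₃} ∪ n₄K₁) be the join of a complete graph K_{n₁} with the disjoint union of two complete graphs and n₄ isolated vertices, where n₁,n₂,n₃ ≥ 1 and n₄ ≥ 0. Then ω(G) = ψ(G) = n₁ + max{n₂, n₃}. -/
import Mathlib


open SimpleGraph

/-- A coloring of the vertices with colors `0, ..., k-1` which uses all `k` colors and such
that every pair of distinct colors appears on the endpoints of some edge. -/
def IsCompleteColoring {V : Type*} (G : SimpleGraph V) (c : V → ℕ) (k : ℕ) : Prop :=
  (∀ v, c v < k) ∧ (∀ i, i < k → ∃ v, c v = i) ∧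
    ∀ i j, i < k → j < k → i ≠ j → ∃ u w, G.Adj u w ∧ c u = i ∧ c w = j

/-- A proper coloring: adjacent vertices get distinct colors. -/
def IsProperColoring {V : Type*} (G : SimpleGraph V) (c : V → ℕ) : Prop :=
  ∀ u w, G.Adj u w → c u ≠ c w

/-- A Grundy coloring with `k` colors: proper, uses all `k` colors, and every vertex of
color `j` has, for each `i < j`, a neighbor colored `i`. -/
def IsGrundyColoring {V : Type*} (G : SimpleGraph V) (c : V → ℕ) (k : ℕ) : Prop :=
  (∀ v, c v < k) ∧ (∀ i, i < k → ∃ v, c v = i) ∧ IsProperColoring G c ∧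
    ∀ v i, i < c v → ∃ u, G.Adj u v ∧ c u = i

/-- The pseudoachromatic number `ψ`. -/
noncomputable def pseudoachromaticNumber {V : Type*} (G : SimpleGraph V) : ℕ :=
  sSup {k | ∃ c, IsCompleteColoring G c k}

/-- The achromatic number `α`. -/
noncomputable def achromaticNumber {V : Type*} (G : SimpleGraph V) : ℕ :=
  sSup {k | ∃ c, IsCompleteColoring G c k ∧ IsProperColoring G c}

/-- The Grundy number `Γ`. -/
noncomputable def grundyNumber {V : Type*} (G : SimpleGraph V) : ℕ :=
  sSup {k | ∃ c, IsGrundyColoring G c k}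

/-- The chromatic number `χ` (as a natural number). -/
noncomputable def chromNumber {V : Type*} (G : SimpleGraph V) : ℕ :=
  sInf {k | ∃ c : V → ℕ, (∀ v, c v < k) ∧ IsProperColoring G c}

/-- The clique number `ω`. -/
noncomputable def cliqueNumber {V : Type*} (G : SimpleGraph V) : ℕ :=
  sSup {n | ∃ s : Finset V, G.IsNClique n s}

/-- `G` is `H`-free: no induced subgraph of `G` is isomorphic to `H`. -/
def GraphFree {V W : Type*} (G : SimpleGraph V) (H : SimpleGraph W) : Prop :=
  ∀ s : Set V, IsEmpty ((G.induce s) ≃g H)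

/-- `G` is `ωψ`-perfect. -/
def OmegaPsiPerfect {V : Type*} (G : SimpleGraph V) : Prop :=
  ∀ s : Set V, cliqueNumber (G.induce s) = pseudoachromaticNumber (G.induce s)

/-- `G` is `χψ`-perfect. -/
def ChiPsiPerfect {V : Type*} (G : SimpleGraph V) : Prop :=
  ∀ s : Set V, chromNumber (G.induce s) = pseudoachromaticNumber (G.induce s)

/-- The path on 4 vertices. -/
def pathP4 : SimpleGraph (Fin 4) :=
  SimpleGraph.fromRel (fun a b => (b : ℕ) = (a : ℕ) + 1)

/-- The cycle on 4 vertices. -/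
def cycleC4 : SimpleGraph (Fin 4) :=
  SimpleGraph.fromRel (fun a b => b = a + 1)

/-- The disjoint union of a path on 3 vertices and an edge. -/
def graphP3K2 : SimpleGraph (Fin 5) :=
  SimpleGraph.fromRel (fun a b => (a, b) ∈ [((0 : Fin 5), (1 : Fin 5)), (1, 2), (3, 4)])

/-- The disjoint union of three edges. -/
def graph3K2 : SimpleGraph (Fin 6) :=
  SimpleGraph.fromRel (fun a b => (a, b) ∈ [((0 : Fin 6), (1 : Fin 6)), (2, 3), (4, 5)])

/-- The join of two graphs. -/
def graphJoin {V W : Type*} (G : SimpleGraph V) (H : SimpleGraph W) : SimpleGraph (V ⊕ W) :=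
  SimpleGraph.fromRel (fun x y =>
    match x, y with
    | Sum.inl a, Sum.inl b => G.Adj a b
    | Sum.inr a, Sum.inr b => H.Adj a b
    | _, _ => True)

/-- The disjoint union of two graphs. -/
def graphSum {V W : Type*} (G : SimpleGraph V) (H : SimpleGraph W) : SimpleGraph (V ⊕ W) :=
  SimpleGraph.fromRel (fun x y =>
    match x, y with
    | Sum.inl a, Sum.inl b => G.Adj a b
    | Sum.inr a, Sum.inr b => H.Adj a b
    | _, _ => False)

/-- The disjoint union of a family of graphs. -/
def graphSigma {ι : Type} {U : ι → Type} (f : ∀ i, SimpleGraph (U i)) :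
    SimpleGraph (Σ i, U i) :=
  SimpleGraph.fromRel (fun x y => ∃ h : x.1 = y.1, (f y.1).Adj (h ▸ x.2) y.2)


lemma clique_coloring {V : Type*} (G : SimpleGraph V) {n : ℕ} {s : Finset V}
    (h : G.IsNClique n s) (hn : 1 ≤ n) : ∃ c, IsCompleteColoring G c n := by
  classical
  obtain ⟨hcl, hcard⟩ := h
  subst hcard
  set e := s.equivFin with he
  refine ⟨fun v => if hv : v ∈ s then (e ⟨v, hv⟩ : ℕ) else 0, ?_, ?_, ?_⟩
  · intro v
    by_cases hv : v ∈ s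
    · simp [hv, (e ⟨v, hv⟩).isLt]
    · simpa [hv] using hn
  · intro i hi
    refine ⟨(e.symm ⟨i, hi⟩ : V), ?_⟩
    have hm := (e.symm ⟨i, hi⟩).2
    simp [hm]
  · intro i j hi hj hij
    refine ⟨(e.symm ⟨i, hi⟩ : V), (e.symm ⟨j, hj⟩ : V), ?_, ?_, ?_⟩
    · refine hcl (e.symm ⟨i, hi⟩).2 (e.symm ⟨j, hj⟩).2 ?_
      intro hh
      apply hij
      have h2 := e.symm.injective (Subtype.ext hh)
      exact congrArg Fin.val h2
    · simp [(e.symm ⟨i, hi⟩).2]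
    · simp [(e.symm ⟨j, hj⟩).2]

section
variable {n₁ n₂ n₃ n₄ : ℕ}

private abbrev myG (n₁ n₂ n₃ n₄ : ℕ) : SimpleGraph (Fin n₁ ⊕ ((Fin n₂ ⊕ Fin n₃) ⊕ Fin n₄)) :=
  graphJoin (completeGraph (Fin n₁))
    (graphSum (graphSum (completeGraph (Fin n₂)) (completeGraph (Fin n₃)))
      (⊥ : SimpleGraph (Fin n₄)))

private abbrev vA (a : Fin n₁) : Fin n₁ ⊕ ((Fin n₂ ⊕ Fin n₃) ⊕ Fin n₄) := Sum.inl a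
private abbrev vB (b : Fin n₂) : Fin n₁ ⊕ ((Fin n₂ ⊕ Fin n₃) ⊕ Fin n₄) := Sum.inr (Sum.inl (Sum.inl b))
private abbrev vC (b : Fin n₃) : Fin n₁ ⊕ ((Fin n₂ ⊕ Fin n₃) ⊕ Fin n₄) := Sum.inr (Sum.inl (Sum.inr b))
private abbrev vD (b : Fin n₄) : Fin n₁ ⊕ ((Fin n₂ ⊕ Fin n₃) ⊕ Fin n₄) := Sum.inr (Sum.inr b)

private lemma adjAA {a a' : Fin n₁} (h : a ≠ a') :
    (myG n₁ n₂ n₃ n₄).Adj (vA a) (vA a') := by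
  simp [graphJoin, graphSum, completeGraph]; tauto
private lemma adjAx (a : Fin n₁) (x : (Fin n₂ ⊕ Fin n₃) ⊕ Fin n₄) :
    (myG n₁ n₂ n₃ n₄).Adj (vA a) (Sum.inr x) := by
  simp [graphJoin, graphSum, completeGraph]
private lemma adjBB {b b' : Fin n₂} (h : b ≠ b') :
    (myG n₁ n₂ n₃ n₄).Adj (vB b) (vB b') := by
  simp [graphJoin, graphSum, completeGraph]; tauto
private lemma adjCC {b b' : Fin n₃} (h : b ≠ b') :
    (myG n₁ n₂ n₃ n₄).Adj (vC b) (vC b') := by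
  simp [graphJoin, graphSum, completeGraph]; tauto
private lemma nadjCB (b : Fin n₃) (b' : Fin n₂) :
    ¬ (myG n₁ n₂ n₃ n₄).Adj (vC b) (vB b') := by
  simp [graphJoin, graphSum, completeGraph]
private lemma nadjCD (b : Fin n₃) (d : Fin n₄) :
    ¬ (myG n₁ n₂ n₃ n₄).Adj (vC b) (vD d) := by
  simp [graphJoin, graphSum, completeGraph]
private lemma nadjBC (b : Fin n₂) (b' : Fin n₃) :
    ¬ (myG n₁ n₂ n₃ n₄).Adj (vB b) (vC b') := by
  simp [graphJoin, graphSum, completeGraph]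
private lemma nadjBD (b : Fin n₂) (d : Fin n₄) :
    ¬ (myG n₁ n₂ n₃ n₄).Adj (vB b) (vD d) := by
  simp [graphJoin, graphSum, completeGraph]
private lemma nadjDB (d : Fin n₄) (b : Fin n₂) :
    ¬ (myG n₁ n₂ n₃ n₄).Adj (vD d) (vB b) := by
  simp [graphJoin, graphSum, completeGraph]
private lemma nadjDC (d : Fin n₄) (b : Fin n₃) :
    ¬ (myG n₁ n₂ n₃ n₄).Adj (vD d) (vC b) := by
  simp [graphJoin, graphSum, completeGraph]
private lemma nadjDD (d d' : Fin n₄) :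
    ¬ (myG n₁ n₂ n₃ n₄).Adj (vD d) (vD d') := by
  simp [graphJoin, graphSum, completeGraph]

lemma upper_bound (h₂ : 1 ≤ n₂) (h₃ : 1 ≤ n₃) {k : ℕ}
    {c : Fin n₁ ⊕ ((Fin n₂ ⊕ Fin n₃) ⊕ Fin n₄) → ℕ}
    (hc : IsCompleteColoring (myG n₁ n₂ n₃ n₄) c k) : k ≤ n₁ + max n₂ n₃ := by
  classical
  obtain ⟨hlt, hsurj, hpair⟩ := hc
  have key : ∀ i j, i < k → j < k → i ≠ j → (∀ a : Fin n₁, c (vA a) ≠ i) →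
      (∀ a : Fin n₁, c (vA a) ≠ j) →
      (∀ b : Fin n₂, c (vB b) ≠ i) → (∀ b : Fin n₃, c (vC b) ≠ j) → False := by
    intro i j hik hjk hij hPi hPj hQi hRj
    obtain ⟨u, w, hadj, hu, hw⟩ := hpair i j hik hjk hij
    rcases u with a | ⟨b | b⟩ | b
    · exact hPi a hu
    · exact hQi b hu
    · rcases w with a | ⟨b' | b'⟩ | b'
      · exact hPj a hw
      · exact nadjCB b b' hadj
      · exact hRj b' hw
      · exact nadjCD b b' hadj
    · rcases w with a | ⟨b' | b'⟩ | b'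
      · exact hPj a hw
      · exact nadjDB b b' hadj
      · exact nadjDC b b' hadj
      · exact nadjDD b b' hadj
  by_cases hB : ∀ i, i < k → (¬ ∃ a : Fin n₁, c (vA a) = i) → ∃ b : Fin n₂, c (vB b) = i
  · have hch : ∀ x : Fin k, ∃ v : Fin n₁ ⊕ Fin n₂, c (Sum.elim vA vB v) = (x : ℕ) := by
      intro x
      by_cases h : ∃ a : Fin n₁, c (vA a) = (x : ℕ)
      · obtain ⟨a, ha⟩ := h; exact ⟨.inl a, ha⟩
      · obtain ⟨b, hb⟩ := hB x x.isLt h; exact ⟨.inr b, hb⟩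
    choose g hg using hch
    have hginj : Function.Injective g := by
      intro x y hxy
      apply Fin.ext
      rw [← hg x, ← hg y, hxy]
    calc k = Fintype.card (Fin k) := (Fintype.card_fin k).symm
      _ ≤ Fintype.card (Fin n₁ ⊕ Fin n₂) := Fintype.card_le_of_injective g hginj
      _ = n₁ + n₂ := by simp
      _ ≤ n₁ + max n₂ n₃ := by omega
  by_cases hC : ∀ i, i < k → (¬ ∃ a : Fin n₁, c (vA a) = i) → ∃ b : Fin n₃, c (vC b) = i
  · have hch : ∀ x : Fin k, ∃ v : Fin n₁ ⊕ Fin n₃, c (Sum.elim vA vC v) = (x : ℕ) := by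
      intro x
      by_cases h : ∃ a : Fin n₁, c (vA a) = (x : ℕ)
      · obtain ⟨a, ha⟩ := h; exact ⟨.inl a, ha⟩
      · obtain ⟨b, hb⟩ := hC x x.isLt h; exact ⟨.inr b, hb⟩
    choose g hg using hch
    have hginj : Function.Injective g := by
      intro x y hxy
      apply Fin.ext
      rw [← hg x, ← hg y, hxy]
    calc k = Fintype.card (Fin k) := (Fintype.card_fin k).symm
      _ ≤ Fintype.card (Fin n₁ ⊕ Fin n₃) := Fintype.card_le_of_injective g hginj
      _ = n₁ + n₃ := by simp
      _ ≤ n₁ + max n₂ n₃ := by omega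
  push_neg at hB hC
  obtain ⟨i, hik, hPi, hQi⟩ := hB
  obtain ⟨j, hjk, hPj, hRj⟩ := hC
  by_cases hij : i = j
  · subst hij
    have hall : ∀ j', j' < k → j' ≠ i → ∃ a : Fin n₁, c (vA a) = j' := by
      intro j' hj'k hj'i
      obtain ⟨u, w, hadj, hu, hw⟩ := hpair j' i hj'k hik hj'i
      rcases w with a | ⟨b | b⟩ | b
      · exact absurd hw (hPi a)
      · exact absurd hw (hQi b)
      · exact absurd hw (hRj b)
      · rcases u with a | ⟨b' | b'⟩ | b'
        · exact ⟨a, hu⟩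
        · exact absurd hadj (nadjBD b' b)
        · exact absurd hadj (nadjCD b' b)
        · exact absurd hadj (nadjDD b' b)
    have hch : ∀ x : Fin k, ∃ v : Fin n₁ ⊕ Fin 1,
        (Sum.elim (fun a => c (vA (n₂ := n₂) (n₃ := n₃) (n₄ := n₄) a)) (fun _ => i) v) = (x : ℕ) := by
      intro x
      by_cases h : (x : ℕ) = i
      · exact ⟨.inr 0, h.symm⟩
      · obtain ⟨a, ha⟩ := hall x x.isLt h; exact ⟨.inl a, ha⟩
    choose g hg using hch
    have hginj : Function.Injective g := by
      intro x y hxy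
      apply Fin.ext
      rw [← hg x, ← hg y, hxy]
    calc k = Fintype.card (Fin k) := (Fintype.card_fin k).symm
      _ ≤ Fintype.card (Fin n₁ ⊕ Fin 1) := Fintype.card_le_of_injective g hginj
      _ = n₁ + 1 := by simp
      _ ≤ n₁ + max n₂ n₃ := by omega
  · exact absurd (key i j hik hjk hij hPi hPj hQi hRj) not_false

lemma clique_exists (h₂ : 1 ≤ n₂) (h₃ : 1 ≤ n₃) :
    ∃ s, (myG n₁ n₂ n₃ n₄).IsNClique (n₁ + max n₂ n₃) s := by
  classical
  rcases le_total n₃ n₂ with h | h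
  · rw [max_eq_left h]
    have hf : Function.Injective (Sum.elim (vA (n₁ := n₁) (n₂ := n₂) (n₃ := n₃) (n₄ := n₄)) vB) := by
      intro x y hxy
      rcases x with a | b <;> rcases y with a' | b' <;> simp_all
    refine ⟨Finset.univ.map ⟨_, hf⟩, ?_, ?_⟩
    · intro u hu w hw hne
      simp only [Finset.coe_map, Set.mem_image, Finset.coe_univ, Set.image_univ,
        Set.mem_range] at hu hw
      obtain ⟨x, rfl⟩ := hu
      obtain ⟨y, rfl⟩ := hw
      rcases x with a | b <;> rcases y with a' | b'
      · exact adjAA (by rintro rfl; exact hne rfl)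
      · exact adjAx a _
      · exact ((myG n₁ n₂ n₃ n₄).adj_symm (adjAx a' _))
      · exact adjBB (by rintro rfl; exact hne rfl)
    · simp
  · rw [max_eq_right h]
    have hf : Function.Injective (Sum.elim (vA (n₁ := n₁) (n₂ := n₂) (n₃ := n₃) (n₄ := n₄)) vC) := by
      intro x y hxy
      rcases x with a | b <;> rcases y with a' | b' <;> simp_all
    refine ⟨Finset.univ.map ⟨_, hf⟩, ?_, ?_⟩
    · intro u hu w hw hne
      simp only [Finset.coe_map, Set.mem_image, Finset.coe_univ, Set.image_univ,
        Set.mem_range] at hu hw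
      obtain ⟨x, rfl⟩ := hu
      obtain ⟨y, rfl⟩ := hw
      rcases x with a | b <;> rcases y with a' | b'
      · exact adjAA (by rintro rfl; exact hne rfl)
      · exact adjAx a _
      · exact ((myG n₁ n₂ n₃ n₄).adj_symm (adjAx a' _))
      · exact adjCC (by rintro rfl; exact hne rfl)
    · simp
end

theorem stmt_13 (n₁ n₂ n₃ n₄ : ℕ) (h₁ : 1 ≤ n₁) (h₂ : 1 ≤ n₂) (h₃ : 1 ≤ n₃) :
    cliqueNumber (graphJoin (completeGraph (Fin n₁))
        (graphSum (graphSum (completeGraph (Fin n₂)) (completeGraph (Fin n₃)))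
          (⊥ : SimpleGraph (Fin n₄)))) = n₁ + max n₂ n₃ ∧
    pseudoachromaticNumber (graphJoin (completeGraph (Fin n₁))
        (graphSum (graphSum (completeGraph (Fin n₂)) (completeGraph (Fin n₃)))
          (⊥ : SimpleGraph (Fin n₄)))) = n₁ + max n₂ n₃ := by
  classical
  set N := n₁ + max n₂ n₃ with hN
  obtain ⟨s, hs⟩ := clique_exists (n₁ := n₁) (n₄ := n₄) h₂ h₃
  have hN1 : 1 ≤ N := by
    have := le_max_left n₂ n₃
    omega
  obtain ⟨c₀, hc₀⟩ := clique_coloring _ hs hN1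
  have hub : ∀ m ∈ {m : ℕ | ∃ c, IsCompleteColoring (myG n₁ n₂ n₃ n₄) c m}, m ≤ N := by
    rintro m ⟨c, hc⟩
    exact upper_bound h₂ h₃ hc
  have hclub : ∀ m ∈ {m : ℕ | ∃ t : Finset (Fin n₁ ⊕ ((Fin n₂ ⊕ Fin n₃) ⊕ Fin n₄)),
      (myG n₁ n₂ n₃ n₄).IsNClique m t}, m ≤ N := by
    rintro m ⟨t, ht⟩
    rcases Nat.eq_zero_or_pos m with rfl | hm
    · exact Nat.zero_le N
    · obtain ⟨c, hc⟩ := clique_coloring _ ht hm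
      exact upper_bound h₂ h₃ hc
  constructor
  · exact le_antisymm (csSup_le ⟨N, s, hs⟩ hclub) (le_csSup ⟨N, hclub⟩ ⟨s, hs⟩)
  · exact le_antisymm (csSup_le ⟨N, c₀, hc₀⟩ hub) (le_csSup ⟨N, hub⟩ ⟨c₀, hc₀⟩)
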